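/- Let N ≥ 3 be an odd integer, let x = (x_0, x_1, …, x_N) ∈ [0,1]^{N+1}, and set y_{j,k} = (x_j + x_k)/2 for 0 ≤ j,k ≤ N. If (N−1)^{-1}(∑_{k=0}^N x_k − 1) ≤ y_{j,k} for every pair (j,k) with 0 ≤ j,k ≤ N and j+k odd, then y_{j,k} ≤ 1/2 for every pair (j,k) with 0 ≤ j,k ≤ N and j+k odd. -/

import Mathlib

lemma card_even_range (n : ℕ) :
    ((Finset.range n).filter (fun i => Even i)).card = (n + 1) / 2 ∧
    ((Finset.range n).filter (fun i => Odd i)).card = n / 2 := by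
  induction n with
  | zero => simp
  | succ n ih =>
    rw [Finset.range_add_one, Finset.filter_insert, Finset.filter_insert]
    rcases Nat.even_or_odd n with he | ho
    · rw [if_pos he, if_neg (Nat.not_odd_iff_even.mpr he)]
      rw [Finset.card_insert_of_notMem (by simp), ih.1, ih.2]
      have := Nat.even_iff.mp he
      omega
    · rw [if_neg (Nat.not_even_iff_odd.mpr ho), if_pos ho]
      rw [Finset.card_insert_of_notMem (by simp), ih.1, ih.2]
      have := Nat.odd_iff.mp ho
      omega

lemma key_half (N : ℕ) (hN : 3 ≤ N) (hNodd : Odd N)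
    (x : ℕ → ℝ)
    (h : ∀ j k, j ≤ N → k ≤ N → Odd (j + k) →
      ((N : ℝ) - 1)⁻¹ * (∑ i ∈ Finset.range (N + 1), x i - 1) ≤ (x j + x k) / 2)
    (j k : ℕ) (hj : j ≤ N) (hk : k ≤ N) (hje : Even j) (hko : Odd k) :
    x j + x k ≤ 1 := by
  set S := ∑ i ∈ Finset.range (N + 1), x i with hS
  set E0 := (Finset.range (N + 1)).filter (fun i => Even i) with hE0
  set O0 := (Finset.range (N + 1)).filter (fun i => Odd i) with hO0
  set E := E0.erase j with hE
  set O := O0.erase k with hO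
  have hjE0 : j ∈ E0 := by simp [hE0, Finset.mem_filter, Nat.lt_succ_iff, hj, hje]
  have hkO0 : k ∈ O0 := by simp [hO0, Finset.mem_filter, Nat.lt_succ_iff, hk, hko]
  obtain ⟨m, hm⟩ := hNodd
  have hcardE0 : E0.card = m + 1 := by
    have := (card_even_range (N + 1)).1
    rw [← hE0] at this
    omega
  have hcardO0 : O0.card = m + 1 := by
    have := (card_even_range (N + 1)).2
    rw [← hO0] at this
    omega
  have hcardE : E.card = m := by
    rw [hE, Finset.card_erase_of_mem hjE0, hcardE0]
    omega
  have hcardO : O.card = m := by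
    rw [hO, Finset.card_erase_of_mem hkO0, hcardO0]
    omega
  have hm1 : 1 ≤ m := by omega
  have hsplit : ∑ i ∈ E0, x i + ∑ i ∈ O0, x i = S := by
    rw [hS, hE0, hO0]
    rw [← Finset.sum_filter_add_sum_filter_not (Finset.range (N+1)) (fun i => Even i) x]
    congr 1
    apply Finset.sum_congr _ (fun _ _ => rfl)
    ext i; simp [Nat.not_even_iff_odd]
  have hsumE : ∑ i ∈ E, x i = ∑ i ∈ E0, x i - x j := by
    rw [hE, Finset.sum_erase_eq_sub hjE0]
  have hsumO : ∑ i ∈ O, x i = ∑ i ∈ O0, x i - x k := by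
    rw [hO, Finset.sum_erase_eq_sub hkO0]
  have hineq : ∀ a ∈ E, ∀ b ∈ O,
      ((N : ℝ) - 1)⁻¹ * (S - 1) ≤ (x a + x b) / 2 := by
    intro a ha b hb
    have ha' : a ∈ E0 := Finset.mem_of_mem_erase ha
    have hb' : b ∈ O0 := Finset.mem_of_mem_erase hb
    simp only [hE0, Finset.mem_filter, Finset.mem_range, Nat.lt_succ_iff] at ha'
    simp only [hO0, Finset.mem_filter, Finset.mem_range, Nat.lt_succ_iff] at hb'
    exact h a b ha'.1 hb'.1 (Even.add_odd ha'.2 hb'.2)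
  have step1 : ∑ a ∈ E, ∑ b ∈ O, (((N : ℝ) - 1)⁻¹ * (S - 1)) ≤
      ∑ a ∈ E, ∑ b ∈ O, (x a + x b) / 2 :=
    Finset.sum_le_sum (fun a ha => Finset.sum_le_sum (fun b hb => hineq a ha b hb))
  simp only [Finset.sum_const, hcardE, hcardO, nsmul_eq_mul] at step1
  have hRHS : ∑ a ∈ E, ∑ b ∈ O, (x a + x b) / 2
      = ((m : ℝ) * (∑ i ∈ E, x i) + (m : ℝ) * (∑ i ∈ O, x i)) / 2 := by
    have hrow : ∀ a : ℕ, ∑ b ∈ O, (x a + x b) / 2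
        = ((m : ℝ) * x a + ∑ i ∈ O, x i) / 2 := by
      intro a
      rw [← Finset.sum_div, Finset.sum_add_distrib, Finset.sum_const, hcardO, nsmul_eq_mul]
    calc ∑ a ∈ E, ∑ b ∈ O, (x a + x b) / 2
        = ∑ a ∈ E, ((m : ℝ) * x a + ∑ i ∈ O, x i) / 2 :=
          Finset.sum_congr rfl (fun a _ => hrow a)
      _ = ((m : ℝ) * (∑ i ∈ E, x i) + (m : ℝ) * (∑ i ∈ O, x i)) / 2 := by
          rw [← Finset.sum_div, Finset.sum_add_distrib, ← Finset.mul_sum,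
            Finset.sum_const, hcardE, nsmul_eq_mul]
  rw [hRHS] at step1
  have hNr : (N : ℝ) - 1 = 2 * m := by
    have : (N : ℝ) = 2 * m + 1 := by exact_mod_cast congrArg (Nat.cast : ℕ → ℝ) hm
    linarith
  have hmpos : (0 : ℝ) < m := by exact_mod_cast hm1
  have hLHS : (m : ℝ) * ((m : ℝ) * (((N : ℝ) - 1)⁻¹ * (S - 1))) = (m : ℝ) * (S - 1) / 2 := by
    rw [hNr]
    field_simp
  rw [hLHS] at step1
  have h2 : (m : ℝ) * (S - 1) ≤ (m : ℝ) * ((∑ i ∈ E, x i) + (∑ i ∈ O, x i)) := by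
    rw [mul_add]; linarith
  have h3 : S - 1 ≤ (∑ i ∈ E, x i) + (∑ i ∈ O, x i) :=
    le_of_mul_le_mul_left h2 hmpos
  rw [hsumE, hsumO] at h3
  linarith

/-- part of Lemma 2.4 in the paper, (1) ⇒ (2).
Let `N ≥ 3` be odd, `x = (x_0,…,x_N) ∈ [0,1]^{N+1}` and `y_{j,k} = (x_j+x_k)/2`.
If `(N-1)⁻¹ (∑ x_k - 1) ≤ y_{j,k}` for all pairs with `j+k` odd, then
`y_{j,k} ≤ 1/2` for all such pairs. -/
theorem stmt_0 (N : ℕ) (hN : 3 ≤ N) (hNodd : Odd N)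
    (x : ℕ → ℝ) (hx : ∀ j, j ≤ N → x j ∈ Set.Icc (0 : ℝ) 1)
    (h : ∀ j k, j ≤ N → k ≤ N → Odd (j + k) →
      ((N : ℝ) - 1)⁻¹ * (∑ i ∈ Finset.range (N + 1), x i - 1) ≤ (x j + x k) / 2) :
    ∀ j k, j ≤ N → k ≤ N → Odd (j + k) → (x j + x k) / 2 ≤ 1 / 2 := by
  intro j k hj hk hjk
  have key : x j + x k ≤ 1 := by
    rcases Nat.even_or_odd j with hje | hjo
    · have hko : Odd k := by
        rcases Nat.even_or_odd k with hke | hko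
        · exact absurd (Even.add hje hke) (Nat.not_even_iff_odd.mpr hjk)
        · exact hko
      exact key_half N hN hNodd x h j k hj hk hje hko
    · have hke : Even k := by
        rcases Nat.even_or_odd k with hke | hko
        · exact hke
        · exact absurd (Odd.add_odd hjo hko) (Nat.not_even_iff_odd.mpr hjk)
      have := key_half N hN hNodd x h k j hk hj hke hjo
      linarith
  linarith
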